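/- arXiv:1705.08526 — 2 statements merged into one kernel-verified Lean document; each statement's English description precedes it below -/
import Mathlib

section
/- Under monotonicity (Y₁(i) ≥ Y₀(i) for all i), the difference-in-means estimator τ̂(T) = n₁₁(T)/N₁ − n₀₁(T)/N₀ has expectation τ and variance var(τ̂) = (N/(N−1))·{ p₁(1−p₁)/N₁ + p₀(1−p₀)/N₀ − τ(1−τ)/N }, where all moments are over the uniform distribution on subsets T of size N₁. -/
/-- Expectation of a real-valued statistic `f` of the treatment group `T`,
where `T` is a uniformly random subset of `{1,…,N}` of size `N₁`. -/
noncomputable def expE (N N₁ : ℕ) (f : Finset (Fin N) → ℝ) : ℝ :=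
  (∑ T ∈ Finset.powersetCard N₁ (Finset.univ : Finset (Fin N)), f T) /
    ((Finset.powersetCard N₁ (Finset.univ : Finset (Fin N))).card : ℝ)

/-- Variance of a real-valued statistic `f` over uniformly random subsets of size `N₁`. -/
noncomputable def varE (N N₁ : ℕ) (f : Finset (Fin N) → ℝ) : ℝ :=
  expE N N₁ (fun T => (f T - expE N N₁ f) ^ 2)

open Finset in
lemma count_subsets {α : Type*} [DecidableEq α] (s t : Finset α) (k : ℕ)
    (hts : t ⊆ s) (htk : t.card ≤ k) :
    ((s.powersetCard k).filter (fun T => t ⊆ T)).card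
      = (s.card - t.card).choose (k - t.card) := by
  rw [← Finset.card_sdiff_of_subset hts, ← Finset.card_powersetCard]
  apply Finset.card_bij' (fun T _ => T \ t) (fun T' _ => T' ∪ t)
  · intro T hT
    simp only [mem_filter, mem_powersetCard] at hT
    obtain ⟨⟨hTs, hTc⟩, htT⟩ := hT
    rw [mem_powersetCard]
    exact ⟨sdiff_subset_sdiff hTs le_rfl, by rw [card_sdiff_of_subset htT, hTc]⟩
  · intro T' hT'
    rw [mem_powersetCard] at hT'
    obtain ⟨hT's, hT'c⟩ := hT'
    have hdisj : Disjoint T' t := Disjoint.mono_left hT's sdiff_disjoint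
    simp only [mem_filter, mem_powersetCard]
    refine ⟨⟨union_subset (hT's.trans sdiff_subset) hts, ?_⟩, subset_union_right⟩
    rw [card_union_of_disjoint hdisj, hT'c]
    omega
  · intro T hT
    simp only [mem_filter, mem_powersetCard] at hT
    exact sdiff_union_of_subset hT.2
  · intro T' hT'
    rw [mem_powersetCard] at hT'
    have hdisj : Disjoint T' t := Disjoint.mono_left hT'.1 sdiff_disjoint
    exact union_sdiff_cancel_right hdisj

lemma choose_mul_aux (n k : ℕ) :
    (n + 1) * Nat.choose n k = Nat.choose (n + 1) (k + 1) * (k + 1) := by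
  simpa [Nat.succ_eq_add_one] using Nat.add_one_mul_choose_eq n k

open Finset in
lemma count_one (N k : ℕ) (hN : 1 ≤ N) (hk : 1 ≤ k) (i : Fin N) :
    ((Finset.powersetCard k (Finset.univ : Finset (Fin N))).filter
        (fun T => i ∈ T)).card * N = N.choose k * k := by
  obtain ⟨n', rfl⟩ : ∃ n', N = n' + 1 := ⟨N - 1, by omega⟩
  obtain ⟨k', rfl⟩ : ∃ k', k = k' + 1 := ⟨k - 1, by omega⟩
  have h1 : ((Finset.powersetCard (k' + 1) (Finset.univ : Finset (Fin (n' + 1)))).filter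
      (fun T => i ∈ T)) = ((Finset.powersetCard (k' + 1) (Finset.univ : Finset (Fin (n' + 1)))).filter
      (fun T => ({i} : Finset (Fin (n' + 1))) ⊆ T)) := by
    apply filter_congr; intro T _; simp
  rw [h1, count_subsets _ _ _ (by simp) (by simp)]
  simp only [card_singleton, card_univ, Fintype.card_fin, Nat.add_sub_cancel]
  rw [mul_comm]
  exact choose_mul_aux n' k'

open Finset in
lemma count_two (N k : ℕ) (hN : 2 ≤ N) (hk : 1 ≤ k) {i j : Fin N} (hij : i ≠ j) :
    ((Finset.powersetCard k (Finset.univ : Finset (Fin N))).filter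
        (fun T => i ∈ T ∧ j ∈ T)).card * (N * (N - 1))
      = N.choose k * (k * (k - 1)) := by
  by_cases hk2 : 2 ≤ k
  · have h1 : ((Finset.powersetCard k (Finset.univ : Finset (Fin N))).filter
        (fun T => i ∈ T ∧ j ∈ T)) = ((Finset.powersetCard k (Finset.univ : Finset (Fin N))).filter
        (fun T => ({i, j} : Finset (Fin N)) ⊆ T)) := by
      apply filter_congr; intro T _; simp [Finset.insert_subset_iff]
    have hcardij : ({i, j} : Finset (Fin N)).card = 2 := by
      rw [Finset.card_insert_of_notMem (by simpa using hij), Finset.card_singleton]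
    rw [h1, count_subsets _ _ _ (by simp) (by rw [hcardij]; exact hk2)]
    rw [hcardij, card_univ, Fintype.card_fin]
    -- goal : (N-2).choose (k-2) * (N * (N-1)) = N.choose k * (k * (k-1))
    obtain ⟨n', hn'⟩ : ∃ n', N = n' + 2 := ⟨N - 2, by omega⟩
    obtain ⟨k'', hk''⟩ : ∃ k'', k = k'' + 2 := ⟨k - 2, by omega⟩
    subst hn'; subst hk''
    have e1 : (n' + 2) - 2 = n' := by omega
    have e2 : (k'' + 2) - 2 = k'' := by omega
    have e3 : (n' + 2) - 1 = n' + 1 := by omega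
    have e4 : (k'' + 2) - 1 = k'' + 1 := by omega
    rw [e1, e2, e3, e4]
    have ha := choose_mul_aux n' k''
    have hb := choose_mul_aux (n' + 1) (k'' + 1)
    calc Nat.choose n' k'' * ((n' + 2) * (n' + 1))
        = (n' + 2) * ((n' + 1) * Nat.choose n' k'') := by ring
      _ = (n' + 2) * (Nat.choose (n' + 1) (k'' + 1) * (k'' + 1)) := by rw [ha]
      _ = ((n' + 2) * Nat.choose (n' + 1) (k'' + 1)) * (k'' + 1) := by ring
      _ = (Nat.choose (n' + 2) (k'' + 2) * (k'' + 2)) * (k'' + 1) := by rw [hb]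
      _ = Nat.choose (n' + 2) (k'' + 2) * ((k'' + 2) * (k'' + 1)) := by ring
  · have hk1 : k = 1 := by omega
    subst hk1
    have hemp : ((Finset.powersetCard 1 (Finset.univ : Finset (Fin N))).filter
        (fun T => i ∈ T ∧ j ∈ T)) = ∅ := by
      rw [Finset.filter_eq_empty_iff]
      intro T hT h
      rw [Finset.mem_powersetCard] at hT
      have h2 : 1 < T.card := Finset.one_lt_card.mpr ⟨i, h.1, j, h.2, hij⟩
      omega
    simp [hemp]

lemma varE_eq (N N₁ : ℕ) (f : Finset (Fin N) → ℝ)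
    (hM : (((Finset.powersetCard N₁ (Finset.univ : Finset (Fin N))).card : ℝ)) ≠ 0) :
    varE N N₁ f = expE N N₁ (fun T => f T ^ 2) - (expE N N₁ f) ^ 2 := by
  unfold varE expE
  set P := Finset.powersetCard N₁ (Finset.univ : Finset (Fin N)) with hP
  set μ : ℝ := (∑ T ∈ P, f T) / (P.card : ℝ) with hμ
  have h1 : ∀ T ∈ P, (f T - μ) ^ 2 = f T ^ 2 - 2 * μ * f T + μ ^ 2 := by
    intro T _; ring
  rw [Finset.sum_congr rfl h1, Finset.sum_add_distrib, Finset.sum_sub_distrib,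
    ← Finset.mul_sum, Finset.sum_const, nsmul_eq_mul, hμ]
  field_simp
  ring
set_option maxHeartbeats 1600000 in
/-- Under monotonicity, `τ̂(T) = n₁₁(T)/N₁ − n₀₁(T)/N₀` has mean `τ` and variance
`(N/(N−1)) { p₁(1−p₁)/N₁ + p₀(1−p₀)/N₀ − τ(1−τ)/N }`. -/
theorem stmt_5 (N N₁ N₀ : ℕ) (hN : 2 ≤ N) (hN₁ : 1 ≤ N₁) (hN₁' : N₁ ≤ N - 1)
    (hN₀ : N₀ = N - N₁)
    (Y1 Y0 : Fin N → ℕ) (hY1 : ∀ i, Y1 i ≤ 1) (hY0 : ∀ i, Y0 i ≤ 1)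
    (hmono : ∀ i, Y0 i ≤ Y1 i)
    (N11 N10 N01 N00 : ℕ)
    (hN11 : N11 = (Finset.univ.filter (fun i => Y1 i = 1 ∧ Y0 i = 1)).card)
    (hN10 : N10 = (Finset.univ.filter (fun i => Y1 i = 1 ∧ Y0 i = 0)).card)
    (hN01 : N01 = (Finset.univ.filter (fun i => Y1 i = 0 ∧ Y0 i = 1)).card)
    (hN00 : N00 = (Finset.univ.filter (fun i => Y1 i = 0 ∧ Y0 i = 0)).card)
    (p1 p0 τ : ℝ) (hp1 : p1 = ((N11 : ℝ) + N10) / N) (hp0 : p0 = ((N11 : ℝ) + N01) / N)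
    (hτ : τ = ((N10 : ℝ) - N01) / N)
    (n11 n01 : Finset (Fin N) → ℕ)
    (hn11 : ∀ T, n11 T = (T.filter (fun i => Y1 i = 1)).card)
    (hn01 : ∀ T, n01 T = (Tᶜ.filter (fun i => Y0 i = 1)).card) :
    expE N N₁ (fun T => (n11 T : ℝ) / N₁ - (n01 T : ℝ) / N₀) = τ ∧
    varE N N₁ (fun T => (n11 T : ℝ) / N₁ - (n01 T : ℝ) / N₀)
      = (N : ℝ) / (N - 1) *
        (p1 * (1 - p1) / N₁ + p0 * (1 - p0) / N₀ - τ * (1 - τ) / N) := by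
  classical
  have hN1N : N₁ ≤ N := by omega
  have hN0pos : 1 ≤ N₀ := by omega
  set P := Finset.powersetCard N₁ (Finset.univ : Finset (Fin N)) with hP
  have hcardP : P.card = N.choose N₁ := by
    rw [hP, Finset.card_powersetCard, Finset.card_univ, Fintype.card_fin]
  have hMne : ((P.card : ℝ)) ≠ 0 := by
    rw [hcardP]; exact_mod_cast (Nat.choose_pos hN1N).ne'
  have hNne : (N : ℝ) ≠ 0 := Nat.cast_ne_zero.mpr (by omega)
  have hN1ne : (N₁ : ℝ) ≠ 0 := Nat.cast_ne_zero.mpr (by omega)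
  have hN0ne : (N₀ : ℝ) ≠ 0 := Nat.cast_ne_zero.mpr (by omega)
  have hNm1ne : (N : ℝ) - 1 ≠ 0 := by
    have : (2:ℝ) ≤ (N:ℝ) := by exact_mod_cast hN
    linarith
  have hN0r : (N₀ : ℝ) = (N : ℝ) - (N₁ : ℝ) := by
    rw [hN₀]; push_cast [Nat.cast_sub hN1N]; ring
  have hNN1ne : (N : ℝ) - (N₁ : ℝ) ≠ 0 := hN0r ▸ hN0ne
  set w : Fin N → ℝ := fun i => (Y1 i : ℝ) / N₁ + (Y0 i : ℝ) / N₀ with hw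
  set s1 : ℝ := ∑ i : Fin N, (Y1 i : ℝ) with hs1def
  set s0 : ℝ := ∑ i : Fin N, (Y0 i : ℝ) with hs0def
  set A : ℝ := ∑ i : Fin N, w i with hAdef
  set B : ℝ := ∑ i : Fin N, (w i) ^ 2 with hBdef
  set c : ℝ := s0 / (N₀ : ℝ) with hcdef
  -- basic count facts
  have hN01z : N01 = 0 := by
    rw [hN01, Finset.card_eq_zero, Finset.filter_eq_empty_iff]
    intro i _
    have := hmono i
    rintro ⟨h1, h2⟩
    omega
  have hN01r : (N01 : ℝ) = 0 := by rw [hN01z]; simp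
  have hs1n : (∑ i : Fin N, Y1 i) = N11 + N10 := by
    rw [hN11, hN10, Finset.card_filter, Finset.card_filter, ← Finset.sum_add_distrib]
    apply Finset.sum_congr rfl
    intro i _
    have h1 := hY1 i; have h0 := hY0 i
    have c1 : Y1 i = 0 ∨ Y1 i = 1 := by omega
    have c0 : Y0 i = 0 ∨ Y0 i = 1 := by omega
    rcases c1 with h | h <;> rcases c0 with h' | h' <;> simp [h, h']
  have hs0n : (∑ i : Fin N, Y0 i) = N11 + N01 := by
    rw [hN11, hN01, Finset.card_filter, Finset.card_filter, ← Finset.sum_add_distrib]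
    apply Finset.sum_congr rfl
    intro i _
    have h1 := hY1 i; have h0 := hY0 i
    have c1 : Y1 i = 0 ∨ Y1 i = 1 := by omega
    have c0 : Y0 i = 0 ∨ Y0 i = 1 := by omega
    rcases c1 with h | h <;> rcases c0 with h' | h' <;> simp [h, h']
  have hs1e : s1 = (N11 : ℝ) + (N10 : ℝ) := by
    rw [hs1def, ← Nat.cast_sum, hs1n]; push_cast; ring
  have hs0e : s0 = (N11 : ℝ) := by
    rw [hs0def, ← Nat.cast_sum, hs0n, hN01z]; push_cast; ring
  -- rewrite the estimator
  have hfun : (fun T : Finset (Fin N) => (n11 T : ℝ) / N₁ - (n01 T : ℝ) / N₀)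
      = fun T => (∑ i ∈ T, w i) - c := by
    funext T
    have h11 : n11 T = ∑ i ∈ T, Y1 i := by
      rw [hn11 T, Finset.card_filter]
      apply Finset.sum_congr rfl
      intro i _
      have h1 := hY1 i
      have c1 : Y1 i = 0 ∨ Y1 i = 1 := by omega
      rcases c1 with h | h <;> simp [h]
    have hle : (∑ i ∈ T, Y0 i) ≤ ∑ i : Fin N, Y0 i :=
      Finset.sum_le_sum_of_subset (Finset.subset_univ T)
    have h01 : n01 T = (∑ i : Fin N, Y0 i) - ∑ i ∈ T, Y0 i := by
      rw [hn01 T, Finset.card_filter]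
      have hsplit : (∑ i ∈ T, Y0 i) + (∑ i ∈ Tᶜ, Y0 i) = ∑ i : Fin N, Y0 i :=
        Finset.sum_add_sum_compl T _
      have heq : (∑ i ∈ Tᶜ, (if Y0 i = 1 then 1 else 0)) = ∑ i ∈ Tᶜ, Y0 i := by
        apply Finset.sum_congr rfl
        intro i _
        have h0 := hY0 i
        have c0 : Y0 i = 0 ∨ Y0 i = 1 := by omega
        rcases c0 with h | h <;> simp [h]
      rw [heq]
      omega
    have h11r : (n11 T : ℝ) = ∑ i ∈ T, (Y1 i : ℝ) := by rw [h11, Nat.cast_sum]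
    have h01r : (n01 T : ℝ) = (∑ i : Fin N, (Y0 i : ℝ)) - ∑ i ∈ T, (Y0 i : ℝ) := by
      rw [h01, Nat.cast_sub hle, Nat.cast_sum, Nat.cast_sum]
    rw [h11r, h01r]
    simp only [hw]
    rw [Finset.sum_add_distrib, ← Finset.sum_div, ← Finset.sum_div, hcdef, hs0def]
    ring
  -- counting facts
  have hc1 : ∀ i : Fin N, ((P.filter (fun T => i ∈ T)).card : ℝ)
      = (P.card : ℝ) * (N₁ : ℝ) / (N : ℝ) := by
    intro i
    have h := count_one N N₁ (by omega) hN₁ i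
    rw [← hP, ← hcardP] at h
    rw [eq_div_iff hNne]
    exact_mod_cast h
  have hc2 : ∀ i j : Fin N, i ≠ j → ((P.filter (fun T => i ∈ T ∧ j ∈ T)).card : ℝ)
      = (P.card : ℝ) * ((N₁ : ℝ) * ((N₁ : ℝ) - 1)) / ((N : ℝ) * ((N : ℝ) - 1)) := by
    intro i j hij
    have h := count_two N N₁ hN hN₁ hij
    rw [← hP, ← hcardP] at h
    have hcast : ((P.filter (fun T => i ∈ T ∧ j ∈ T)).card : ℝ) * ((N : ℝ) * ((N : ℝ) - 1))
        = (P.card : ℝ) * ((N₁ : ℝ) * ((N₁ : ℝ) - 1)) := by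
      have h' := congrArg (Nat.cast : ℕ → ℝ) h
      push_cast [Nat.cast_sub (by omega : 1 ≤ N), Nat.cast_sub hN₁] at h'
      linear_combination h'
    rw [eq_div_iff (mul_ne_zero hNne hNm1ne)]
    linear_combination hcast
  -- moments
  have hrep : ∀ T ∈ P, (∑ i ∈ T, w i) = ∑ i : Fin N, (if i ∈ T then w i else 0) := by
    intro T _
    rw [Finset.sum_ite_mem, Finset.univ_inter]
  have hsum1 : (∑ T ∈ P, ∑ i ∈ T, w i) = ((P.card : ℝ) * (N₁ : ℝ) / (N : ℝ)) * A := by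
    rw [Finset.sum_congr rfl hrep, Finset.sum_comm, hAdef, Finset.mul_sum]
    apply Finset.sum_congr rfl
    intro i _
    rw [← Finset.sum_filter, Finset.sum_const, nsmul_eq_mul, hc1 i]
  have hrep2 : ∀ T ∈ P, (∑ i ∈ T, w i) ^ 2
      = ∑ i : Fin N, ∑ j : Fin N, (if i ∈ T ∧ j ∈ T then w i * w j else 0) := by
    intro T hT
    rw [sq, hrep T hT, Finset.sum_mul_sum]
    apply Finset.sum_congr rfl; intro i _
    apply Finset.sum_congr rfl; intro j _
    by_cases hi : i ∈ T <;> by_cases hj : j ∈ T <;> simp [hi, hj]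
  have hTij : ∀ i j : Fin N, (∑ T ∈ P, if i ∈ T ∧ j ∈ T then w i * w j else 0)
      = (if i = j then (P.card : ℝ) * (N₁ : ℝ) / (N : ℝ)
          else (P.card : ℝ) * ((N₁ : ℝ) * ((N₁ : ℝ) - 1)) / ((N : ℝ) * ((N : ℝ) - 1)))
        * (w i * w j) := by
    intro i j
    rw [← Finset.sum_filter, Finset.sum_const, nsmul_eq_mul]
    by_cases hij : i = j
    · subst hij
      simp only [and_self]
      rw [hc1 i]
      simp
    · rw [hc2 i j hij, if_neg hij]
  have hsum2 : (∑ T ∈ P, (∑ i ∈ T, w i) ^ 2)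
      = ((P.card : ℝ) * ((N₁ : ℝ) * ((N₁ : ℝ) - 1)) / ((N : ℝ) * ((N : ℝ) - 1))) * A ^ 2
        + ((P.card : ℝ) * (N₁ : ℝ) / (N : ℝ)
            - (P.card : ℝ) * ((N₁ : ℝ) * ((N₁ : ℝ) - 1)) / ((N : ℝ) * ((N : ℝ) - 1))) * B := by
    set r1 : ℝ := (P.card : ℝ) * (N₁ : ℝ) / (N : ℝ) with hr1
    set r2 : ℝ := (P.card : ℝ) * ((N₁ : ℝ) * ((N₁ : ℝ) - 1)) / ((N : ℝ) * ((N : ℝ) - 1)) with hr2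
    rw [Finset.sum_congr rfl hrep2, Finset.sum_comm]
    have hcomm : ∀ i ∈ (Finset.univ : Finset (Fin N)),
        (∑ T ∈ P, ∑ j : Fin N, if i ∈ T ∧ j ∈ T then w i * w j else 0)
        = ∑ j : Fin N, ∑ T ∈ P, (if i ∈ T ∧ j ∈ T then w i * w j else 0) := by
      intro i _; exact Finset.sum_comm
    rw [Finset.sum_congr rfl hcomm]
    have hinner : ∀ i ∈ (Finset.univ : Finset (Fin N)),
        (∑ j : Fin N, ∑ T ∈ P, (if i ∈ T ∧ j ∈ T then w i * w j else 0))
        = r2 * A * w i + (r1 - r2) * w i ^ 2 := by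
      intro i _
      have hj : ∀ j ∈ (Finset.univ : Finset (Fin N)),
          (∑ T ∈ P, if i ∈ T ∧ j ∈ T then w i * w j else 0)
          = r2 * (w i * w j) + (if j = i then (r1 - r2) * (w i * w i) else 0) := by
        intro j _
        rw [hTij i j]
        by_cases h : i = j
        · subst h; rw [if_pos rfl, if_pos rfl]; ring
        · rw [if_neg h, if_neg (fun hh => h hh.symm)]; ring
      rw [Finset.sum_congr rfl hj, Finset.sum_add_distrib]
      congr 1
      · rw [← Finset.mul_sum, ← Finset.mul_sum, ← hAdef]; ring
      · rw [Finset.sum_ite_eq' Finset.univ i (fun _ => (r1 - r2) * (w i * w i))]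
        rw [if_pos (Finset.mem_univ i)]
        ring
    rw [Finset.sum_congr rfl hinner, Finset.sum_add_distrib, ← Finset.mul_sum,
      ← Finset.mul_sum, ← hAdef, ← hBdef]
    ring
  -- closed forms for A and B
  have hAr : A = s1 / (N₁ : ℝ) + s0 / (N₀ : ℝ) := by
    rw [hAdef]
    simp only [hw]
    rw [Finset.sum_add_distrib, ← Finset.sum_div, ← Finset.sum_div, ← hs1def, ← hs0def]
  have hBr : B = s1 / (N₁ : ℝ) ^ 2 + 2 * s0 / ((N₁ : ℝ) * (N₀ : ℝ)) + s0 / (N₀ : ℝ) ^ 2 := by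
    rw [hBdef]
    have hw2 : ∀ i ∈ (Finset.univ : Finset (Fin N)), (w i) ^ 2
        = (Y1 i : ℝ) / (N₁ : ℝ) ^ 2 + 2 * (Y0 i : ℝ) / ((N₁ : ℝ) * (N₀ : ℝ))
          + (Y0 i : ℝ) / (N₀ : ℝ) ^ 2 := by
      intro i _
      have hm := hmono i; have h1 := hY1 i; have h0 := hY0 i
      have c1 : Y1 i = 0 ∨ Y1 i = 1 := by omega
      have c0 : Y0 i = 0 ∨ Y0 i = 1 := by omega
      rcases c1 with h | h <;> rcases c0 with h' | h'
      · simp [hw, h, h']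
      · exfalso; omega
      · simp only [hw, h, h', Nat.cast_zero, Nat.cast_one]
        field_simp
        ring
      · simp only [hw, h, h', Nat.cast_one]
        field_simp
        ring
    rw [Finset.sum_congr rfl hw2, Finset.sum_add_distrib, Finset.sum_add_distrib,
      ← Finset.sum_div, ← Finset.sum_div, ← Finset.sum_div, ← Finset.mul_sum,
      ← hs1def, ← hs0def]
  -- unfolding expE
  have hexp : ∀ f : Finset (Fin N) → ℝ, expE N N₁ f = (∑ T ∈ P, f T) / (P.card : ℝ) := by
    intro f; simp only [expE, hP]
  constructor
  · rw [hfun]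
    simp only [hexp]
    rw [Finset.sum_sub_distrib, Finset.sum_const, nsmul_eq_mul, hsum1]
    rw [hAr, hcdef, hs1e, hs0e, hτ, hN01r, hN0r]
    field_simp
    ring
  · rw [hfun, varE_eq N N₁ _ (by rw [← hP]; exact hMne)]
    simp only [hexp]
    have hsq : ∀ T ∈ P, ((∑ i ∈ T, w i) - c) ^ 2
        = (∑ i ∈ T, w i) ^ 2 - 2 * c * (∑ i ∈ T, w i) + c ^ 2 := by
      intro T _; ring
    have hS1 : (∑ T ∈ P, ((∑ i ∈ T, w i) - c))
        = ((P.card : ℝ) * (N₁ : ℝ) / (N : ℝ)) * A - (P.card : ℝ) * c := by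
      rw [Finset.sum_sub_distrib, Finset.sum_const, nsmul_eq_mul, hsum1]
    have hS2 : (∑ T ∈ P, ((∑ i ∈ T, w i) - c) ^ 2)
        = (((P.card : ℝ) * ((N₁ : ℝ) * ((N₁ : ℝ) - 1)) / ((N : ℝ) * ((N : ℝ) - 1))) * A ^ 2
            + ((P.card : ℝ) * (N₁ : ℝ) / (N : ℝ)
              - (P.card : ℝ) * ((N₁ : ℝ) * ((N₁ : ℝ) - 1)) / ((N : ℝ) * ((N : ℝ) - 1))) * B)
          - 2 * c * (((P.card : ℝ) * (N₁ : ℝ) / (N : ℝ)) * A) + (P.card : ℝ) * c ^ 2 := by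
      rw [Finset.sum_congr rfl hsq, Finset.sum_add_distrib, Finset.sum_sub_distrib,
        ← Finset.mul_sum, Finset.sum_const, nsmul_eq_mul, hsum1, hsum2]
    rw [hS2, hS1, hAr, hBr, hcdef, hs1e, hs0e, hp1, hp0, hτ, hN01r, hN0r]
    field_simp
    ring
end

section
/- Over the uniform distribution on subsets T of size N₁, the prediction error of the attributable effect satisfies var(A(T) − N₁·τ̂(T)) = (N·N₁/N₀)·S₀², where S₀² = (1/(N−1))Σᵢ(Y₀(i) − Ȳ(0))². In particular, when the potential outcomes are binary with p₀ = (1/N)ΣY₀(i), this equals N²N₁·p₀(1−p₀)/(N₀(N−1)); the variance does not depend on the association between the potential outcomes. -/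
open Finset
open Finset

lemma count_subset {α : Type*} [DecidableEq α] (s t : Finset α) (hts : t ⊆ s) (k : ℕ)
    (htk : t.card ≤ k) :
    ((s.powersetCard k).filter (fun T => t ⊆ T)).card
      = (s.card - t.card).choose (k - t.card) := by
  rw [← Finset.card_sdiff_of_subset hts, ← Finset.card_powersetCard]
  apply Finset.card_bij' (fun T _ => T \ t) (fun U _ => U ∪ t)
  · intro T hT
    simp only [mem_filter, mem_powersetCard] at hT
    obtain ⟨⟨hTs, hTk⟩, htT⟩ := hT
    rw [mem_powersetCard]
    exact ⟨sdiff_subset_sdiff hTs (le_refl t), by rw [card_sdiff_of_subset htT, hTk]⟩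
  · intro U hU
    rw [mem_powersetCard] at hU
    obtain ⟨hUs, hUk⟩ := hU
    have hdisj : Disjoint U t := disjoint_of_subset_left hUs sdiff_disjoint
    simp only [mem_filter, mem_powersetCard]
    refine ⟨⟨union_subset (hUs.trans sdiff_subset) hts, ?_⟩, subset_union_right⟩
    rw [card_union_of_disjoint hdisj, hUk, Nat.sub_add_cancel htk]
  · intro T hT
    simp only [mem_filter] at hT
    exact sdiff_union_of_subset hT.2
  · intro U hU
    rw [mem_powersetCard] at hU
    exact union_sdiff_cancel_right (disjoint_of_subset_left hU.1 sdiff_disjoint)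

lemma count_single (N k : ℕ) (hk : 1 ≤ k) (hkN : k ≤ N) (i : Fin N) :
    ((((Finset.univ : Finset (Fin N))).powersetCard k).filter (fun T => i ∈ T)).card * N
      = N.choose k * k := by
  have h := count_subset (Finset.univ : Finset (Fin N)) {i} (subset_univ _) k (by simpa using hk)
  simp only [singleton_subset_iff, card_singleton, card_univ, Fintype.card_fin] at h
  rw [h]
  have hN : 1 ≤ N := le_trans hk hkN
  have := Nat.add_one_mul_choose_eq (N - 1) (k - 1)
  rw [Nat.sub_add_cancel hN, Nat.sub_add_cancel hk] at this
  rw [mul_comm]; exact this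

lemma count_pair (N k : ℕ) (hkN : k ≤ N) (i j : Fin N) (hij : i ≠ j) :
    ((((Finset.univ : Finset (Fin N))).powersetCard k).filter (fun T => i ∈ T ∧ j ∈ T)).card
        * (N * (N - 1))
      = N.choose k * (k * (k - 1)) := by
  rcases lt_or_ge k 2 with hk2 | hk2
  · have h0 : (((Finset.univ : Finset (Fin N))).powersetCard k).filter
        (fun T => i ∈ T ∧ j ∈ T) = ∅ := by
      rw [filter_eq_empty_iff]
      rintro T hT ⟨hi, hj⟩
      rw [mem_powersetCard] at hT
      have : ({i, j} : Finset (Fin N)) ⊆ T := by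
        intro x hx; simp only [mem_insert, mem_singleton] at hx
        rcases hx with rfl | rfl <;> assumption
      have h2 : ({i, j} : Finset (Fin N)).card = 2 := by
        rw [card_insert_of_notMem (by simpa using hij), card_singleton]
      have := card_le_card this
      omega
    rw [h0]
    interval_cases k <;> simp
  · have hcard2 : ({i, j} : Finset (Fin N)).card = 2 := by
      rw [card_insert_of_notMem (by simpa using hij), card_singleton]
    have h := count_subset (Finset.univ : Finset (Fin N)) {i, j} (subset_univ _) k
      (by omega)
    rw [hcard2, card_univ, Fintype.card_fin] at h
    have hfe : (((Finset.univ : Finset (Fin N))).powersetCard k).filter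
          (fun T => i ∈ T ∧ j ∈ T)
        = (((Finset.univ : Finset (Fin N))).powersetCard k).filter
          (fun T => ({i, j} : Finset (Fin N)) ⊆ T) := by
      apply filter_congr
      intro T _
      simp [insert_subset_iff]
    rw [hfe, h]
    have hN : 2 ≤ N := le_trans hk2 hkN
    have h1 := Nat.add_one_mul_choose_eq (N - 1) (k - 1)
    rw [Nat.sub_add_cancel (by omega : 1 ≤ N),
      Nat.sub_add_cancel (by omega : 1 ≤ k)] at h1
    have h2 := Nat.add_one_mul_choose_eq (N - 2) (k - 2)
    rw [(by omega : N - 2 + 1 = N - 1),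
      (by omega : k - 2 + 1 = k - 1)] at h2
    calc (N - 2).choose (k - 2) * (N * (N - 1))
        = ((N - 1) * (N - 2).choose (k - 2)) * N := by ring
      _ = ((N - 1).choose (k - 1) * (k - 1)) * N := by rw [h2]
      _ = (N * (N - 1).choose (k - 1)) * (k - 1) := by ring
      _ = (N.choose k * k) * (k - 1) := by rw [h1]
      _ = N.choose k * (k * (k - 1)) := by ring
open Finset

lemma sum_linear (N k : ℕ) (a : Fin N → ℝ) :
    ∑ T ∈ (Finset.univ : Finset (Fin N)).powersetCard k, ∑ i ∈ T, a i
      = ∑ i, ((((Finset.univ : Finset (Fin N)).powersetCard k).filter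
          (fun T => i ∈ T)).card : ℝ) * a i := by
  have h1 : ∀ T ∈ (Finset.univ : Finset (Fin N)).powersetCard k,
      ∑ i ∈ T, a i = ∑ i, if i ∈ T then a i else 0 := by
    intro T _
    rw [Finset.sum_ite_mem, univ_inter]
  rw [Finset.sum_congr rfl h1, Finset.sum_comm]
  refine Finset.sum_congr rfl fun i _ => ?_
  rw [← Finset.sum_filter, Finset.sum_const, nsmul_eq_mul]

lemma sum_sq (N k : ℕ) (a : Fin N → ℝ) :
    ∑ T ∈ (Finset.univ : Finset (Fin N)).powersetCard k, (∑ i ∈ T, a i) ^ 2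
      = ∑ i, ∑ j, ((((Finset.univ : Finset (Fin N)).powersetCard k).filter
          (fun T => i ∈ T ∧ j ∈ T)).card : ℝ) * (a i * a j) := by
  have h1 : ∀ T ∈ (Finset.univ : Finset (Fin N)).powersetCard k,
      (∑ i ∈ T, a i) ^ 2 = ∑ i, ∑ j, if i ∈ T ∧ j ∈ T then a i * a j else 0 := by
    intro T _
    rw [sq, Finset.sum_mul_sum]
    symm
    calc ∑ i, ∑ j, (if i ∈ T ∧ j ∈ T then a i * a j else 0)
        = ∑ i, if i ∈ T then (∑ j, if j ∈ T then a i * a j else 0) else 0 := by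
          refine Finset.sum_congr rfl fun i _ => ?_
          by_cases hi : i ∈ T <;> simp [hi]
      _ = ∑ i ∈ T, ∑ j, if j ∈ T then a i * a j else 0 := by
          rw [Finset.sum_ite_mem, univ_inter]
      _ = ∑ i ∈ T, ∑ j ∈ T, a i * a j := by
          refine Finset.sum_congr rfl fun i _ => ?_
          rw [Finset.sum_ite_mem, univ_inter]
  rw [Finset.sum_congr rfl h1, Finset.sum_comm]
  refine Finset.sum_congr rfl fun i _ => ?_
  rw [Finset.sum_comm]
  refine Finset.sum_congr rfl fun j _ => ?_
  rw [← Finset.sum_filter, Finset.sum_const, nsmul_eq_mul]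

/-- The prediction error of the attributable effect satisfies
`var(A(T) − N₁ τ̂(T)) = (N N₁ / N₀) S₀²`; in particular, for binary outcomes
this equals `N² N₁ p₀ (1 − p₀) / (N₀ (N − 1))`, so the variance does not
depend on the association between the potential outcomes. -/
theorem stmt_19 (N N₁ N₀ : ℕ) (hN : 2 ≤ N) (hN₁ : 1 ≤ N₁) (hN₁' : N₁ ≤ N - 1)
    (hN₀ : N₀ = N - N₁) (Y1 Y0 : Fin N → ℝ) (Ybar0 S0sq : ℝ)
    (hYbar0 : Ybar0 = (∑ i, Y0 i) / N)
    (hS0 : S0sq = (∑ i, (Y0 i - Ybar0) ^ 2) / (N - 1)) :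
    varE N N₁ (fun T =>
        (∑ i ∈ T, (Y1 i - Y0 i))
          - N₁ * ((∑ i ∈ T, Y1 i) / N₁ - (∑ i ∈ Tᶜ, Y0 i) / N₀))
      = (N : ℝ) * N₁ / N₀ * S0sq ∧
    ((∀ i, Y0 i = 0 ∨ Y0 i = 1) → ∀ p0 : ℝ, p0 = (∑ i, Y0 i) / N →
      varE N N₁ (fun T =>
          (∑ i ∈ T, (Y1 i - Y0 i))
            - N₁ * ((∑ i ∈ T, Y1 i) / N₁ - (∑ i ∈ Tᶜ, Y0 i) / N₀))
        = (N : ℝ) ^ 2 * N₁ * p0 * (1 - p0) / (N₀ * (N - 1))) := by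
  have hNN : N₁ + N₀ = N := by omega
  have hN1N : N₁ ≤ N := by omega
  have hNr : (N : ℝ) ≠ 0 := Nat.cast_ne_zero.mpr (by omega)
  have hN1r : (N₁ : ℝ) ≠ 0 := Nat.cast_ne_zero.mpr (by omega)
  have hN0r : (N₀ : ℝ) ≠ 0 := Nat.cast_ne_zero.mpr (by omega)
  have hN2r : (2 : ℝ) ≤ (N : ℝ) := by exact_mod_cast hN
  have hNm1 : (N : ℝ) - 1 ≠ 0 := by linarith
  have hNcast : (N₀ : ℝ) = (N : ℝ) - (N₁ : ℝ) := by
    have : ((N₁ : ℕ) : ℝ) + ((N₀ : ℕ) : ℝ) = ((N : ℕ) : ℝ) := by exact_mod_cast hNN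
    linarith
  set P := Finset.powersetCard N₁ (Finset.univ : Finset (Fin N)) with hPdef
  have hMc : (P.card : ℝ) = (N.choose N₁ : ℝ) := by
    rw [hPdef, Finset.card_powersetCard, card_univ, Fintype.card_fin]
  have hM : (P.card : ℝ) ≠ 0 := by
    rw [hMc]
    exact Nat.cast_ne_zero.mpr (Nat.choose_pos hN1N).ne'
  set M := (P.card : ℝ) with hMdef
  set S := ∑ i, Y0 i with hSdef
  set Q := ∑ i, (Y0 i) ^ 2 with hQdef
  -- counts
  have hc1 : ∀ i : Fin N, ((P.filter (fun T => i ∈ T)).card : ℝ) = M * N₁ / N := by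
    intro i
    have h := count_single N N₁ hN₁ hN1N i
    have h' : ((P.filter (fun T => i ∈ T)).card : ℝ) * (N : ℝ)
        = (N.choose N₁ : ℝ) * (N₁ : ℝ) := by exact_mod_cast h
    rw [eq_div_iff hNr, hMc]
    linarith [h']
  have hc2 : ∀ i j : Fin N, i ≠ j →
      ((P.filter (fun T => i ∈ T ∧ j ∈ T)).card : ℝ)
        = M * N₁ * ((N₁ : ℝ) - 1) / ((N : ℝ) * ((N : ℝ) - 1)) := by
    intro i j hij
    have h := count_pair N N₁ hN1N i j hij
    have h' := congrArg (Nat.cast : ℕ → ℝ) h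
    push_cast [Nat.cast_sub (show 1 ≤ N by omega), Nat.cast_sub hN₁] at h'
    rw [eq_div_iff (mul_ne_zero hNr hNm1), hMc]
    linarith [h']
  -- first and second moments of g T = ∑ i ∈ T, Y0 i
  have hE1 : ∑ T ∈ P, (∑ i ∈ T, Y0 i) = M * N₁ / N * S := by
    rw [hPdef, sum_linear]
    simp only [← hPdef, hc1]
    rw [← Finset.mul_sum, ← hSdef]
  have hE2 : ∑ T ∈ P, (∑ i ∈ T, Y0 i) ^ 2
      = M * N₁ / N * Q + M * N₁ * ((N₁ : ℝ) - 1) / ((N : ℝ) * ((N : ℝ) - 1)) * (S ^ 2 - Q) := by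
    rw [hPdef, sum_sq]
    have hrow : ∀ i : Fin N,
        ∑ j, ((((Finset.univ : Finset (Fin N)).powersetCard N₁).filter
            (fun T => i ∈ T ∧ j ∈ T)).card : ℝ) * (Y0 i * Y0 j)
          = M * N₁ / N * (Y0 i) ^ 2
            + M * N₁ * ((N₁ : ℝ) - 1) / ((N : ℝ) * ((N : ℝ) - 1)) * (Y0 i * (S - Y0 i)) := by
      intro i
      rw [← Finset.sum_erase_add _ _ (mem_univ i)]
      have hdiag : ((((Finset.univ : Finset (Fin N)).powersetCard N₁).filter
          (fun T => i ∈ T ∧ i ∈ T)).card : ℝ) * (Y0 i * Y0 i) = M * N₁ / N * (Y0 i) ^ 2 := by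
        have hfil : ((Finset.univ : Finset (Fin N)).powersetCard N₁).filter
              (fun T => i ∈ T ∧ i ∈ T)
            = ((Finset.univ : Finset (Fin N)).powersetCard N₁).filter (fun T => i ∈ T) := by
          simp only [and_self]
        rw [hfil, ← hPdef, hc1 i]
        ring
      have hoff : ∑ j ∈ (Finset.univ : Finset (Fin N)).erase i,
          ((((Finset.univ : Finset (Fin N)).powersetCard N₁).filter
            (fun T => i ∈ T ∧ j ∈ T)).card : ℝ) * (Y0 i * Y0 j)
          = M * N₁ * ((N₁ : ℝ) - 1) / ((N : ℝ) * ((N : ℝ) - 1)) * (Y0 i * (S - Y0 i)) := by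
        have : ∀ j ∈ (Finset.univ : Finset (Fin N)).erase i,
            ((((Finset.univ : Finset (Fin N)).powersetCard N₁).filter
              (fun T => i ∈ T ∧ j ∈ T)).card : ℝ) * (Y0 i * Y0 j)
            = M * N₁ * ((N₁ : ℝ) - 1) / ((N : ℝ) * ((N : ℝ) - 1)) * (Y0 i * Y0 j) := by
          intro j hj
          rw [← hPdef, hc2 i j (Finset.ne_of_mem_erase hj).symm]
        rw [Finset.sum_congr rfl this, ← Finset.mul_sum, ← Finset.mul_sum,
          Finset.sum_erase_eq_sub (mem_univ i), ← hSdef]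
      rw [hdiag, hoff]
      ring
    rw [Finset.sum_congr rfl (fun i _ => hrow i)]
    rw [Finset.sum_add_distrib, ← Finset.mul_sum, ← Finset.mul_sum, ← hQdef]
    congr 1
    have : ∑ i, Y0 i * (S - Y0 i) = S ^ 2 - Q := by
      have h1 : ∀ i : Fin N, Y0 i * (S - Y0 i) = Y0 i * S - (Y0 i) ^ 2 := fun i => by ring
      rw [Finset.sum_congr rfl (fun i _ => h1 i), Finset.sum_sub_distrib,
        ← Finset.sum_mul, ← hSdef, ← hQdef]
      ring
    rw [this]
  -- the statistic
  set f : Finset (Fin N) → ℝ := fun T =>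
      (∑ i ∈ T, (Y1 i - Y0 i))
        - N₁ * ((∑ i ∈ T, Y1 i) / N₁ - (∑ i ∈ Tᶜ, Y0 i) / N₀) with hfdef
  have hfT : ∀ T : Finset (Fin N),
      f T = (N₁ : ℝ) / N₀ * S - (N : ℝ) / N₀ * (∑ i ∈ T, Y0 i) := by
    intro T
    have hTc : ∑ i ∈ Tᶜ, Y0 i = S - ∑ i ∈ T, Y0 i := by
      have := Finset.sum_add_sum_compl T Y0
      rw [← hSdef] at this
      linarith
    rw [hfdef]
    simp only [Finset.sum_sub_distrib, hTc]
    rw [show ((N : ℕ) : ℝ) = (N₁ : ℝ) + (N₀ : ℝ) by linarith [hNcast]]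
    field_simp
    ring
  -- expectation of f
  have hEf : expE N N₁ f = (N₁ : ℝ) / N₀ * S - (N : ℝ) / N₀ * (N₁ * S / N) := by
    rw [expE, ← hPdef, ← hMdef, Finset.sum_congr rfl (fun T _ => hfT T)]
    rw [Finset.sum_sub_distrib, Finset.sum_const, ← Finset.mul_sum, hE1, nsmul_eq_mul, ← hMdef]
    field_simp
  have key : varE N N₁ f = (N : ℝ) * N₁ / N₀ * S0sq := by
    rw [varE, expE, ← hPdef, ← hMdef, hEf]
    have hterm : ∀ T : Finset (Fin N),
        (f T - ((N₁ : ℝ) / N₀ * S - (N : ℝ) / N₀ * (N₁ * S / N))) ^ 2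
          = ((N : ℝ) / N₀) ^ 2 * ((∑ i ∈ T, Y0 i) ^ 2
              - 2 * ((N₁ : ℝ) * S / N) * (∑ i ∈ T, Y0 i) + ((N₁ : ℝ) * S / N) ^ 2) := by
      intro T
      rw [hfT T]
      ring
    rw [Finset.sum_congr rfl (fun T _ => hterm T), ← Finset.mul_sum]
    rw [Finset.sum_add_distrib, Finset.sum_sub_distrib, ← Finset.mul_sum,
      hE1, hE2, Finset.sum_const, nsmul_eq_mul, ← hMdef]
    have hS0' : S0sq = (Q - S ^ 2 / N) / ((N : ℝ) - 1) := by
      rw [hS0, hYbar0]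
      congr 1
      have h1 : ∀ i : Fin N, (Y0 i - S / N) ^ 2
          = (Y0 i) ^ 2 - 2 * (S / N) * Y0 i + (S / N) ^ 2 := fun i => by ring
      rw [Finset.sum_congr rfl (fun i _ => h1 i), Finset.sum_add_distrib,
        Finset.sum_sub_distrib, ← Finset.mul_sum, ← hSdef, ← hQdef,
        Finset.sum_const, card_univ, Fintype.card_fin, nsmul_eq_mul]
      field_simp
      ring
    rw [hS0', hNcast]
    have hNN1 : (N : ℝ) - (N₁ : ℝ) ≠ 0 := by rw [← hNcast]; exact hN0r
    field_simp
    ring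
  refine ⟨key, ?_⟩
  intro hbin p0 hp0
  rw [key]
  have hQS : Q = S := by
    rw [hQdef, hSdef]
    refine Finset.sum_congr rfl fun i _ => ?_
    rcases hbin i with h | h <;> rw [h] <;> ring
  have hSp : S = (N : ℝ) * p0 := by
    rw [hp0]
    field_simp
  have hS0' : S0sq = (Q - S ^ 2 / N) / ((N : ℝ) - 1) := by
    rw [hS0, hYbar0]
    congr 1
    have h1 : ∀ i : Fin N, (Y0 i - S / N) ^ 2
        = (Y0 i) ^ 2 - 2 * (S / N) * Y0 i + (S / N) ^ 2 := fun i => by ring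
    rw [Finset.sum_congr rfl (fun i _ => h1 i), Finset.sum_add_distrib,
      Finset.sum_sub_distrib, ← Finset.mul_sum, ← hSdef, ← hQdef,
      Finset.sum_const, card_univ, Fintype.card_fin, nsmul_eq_mul]
    field_simp
    ring
  rw [hS0', hQS, hSp]
  field_simp
end
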